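/- Let f_1,...,f_n : D → ℝ be μ-strongly convex, G-Lipschitz differentiable functions on a convex compact set D ⊆ ℝ^d, and let g_i(x) = (1/i)∑_{j=1}^i f_j(x) with minimizer x_i* over D. Then for all i ∈ [n-1] and j ∈ [n-i], ‖x*_{i+j} - x*_i‖ ≤ 2jG/(μ(2i+j)). -/

import Mathlib

open Finset

/-- Gap lemma: at a minimizer of a strongly convex function, the function grows
at least quadratically. -/
lemma minGap {E : Type*} [NormedAddCommGroup E] [NormedSpace ℝ E] {D : Set E} {μ : ℝ}
    {F : E → ℝ} (hF : StrongConvexOn D μ F) {x y : E} (hx : x ∈ D) (hy : y ∈ D)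
    (hmin : IsMinOn F D x) : μ / 2 * ‖y - x‖ ^ 2 ≤ F y - F x := by
  by_contra hcon
  push_neg at hcon
  have hC : 0 ≤ F y - F x := sub_nonneg.2 (hmin hy)
  set K : ℝ := μ / 2 * ‖y - x‖ ^ 2 with hK
  set C : ℝ := F y - F x with hCdef
  have hKpos : 0 < K := lt_of_le_of_lt hC hcon
  set a : ℝ := (C + K) / (2 * K) with ha
  have ha0 : 0 ≤ a := by
    have : 0 ≤ C + K := by linarith
    positivity
  have ha1 : a < 1 := by
    rw [ha, div_lt_one (by linarith)]
    linarith
  have hb0 : (0:ℝ) ≤ 1 - a := by linarith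
  have hmem : a • x + (1 - a) • y ∈ D := hF.1 hx hy ha0 hb0 (by ring)
  have h1 := hF.2 hx hy ha0 hb0 (show a + (1 - a) = 1 by ring)
  have h2 : F x ≤ F (a • x + (1 - a) • y) := hmin hmem
  simp only [smul_eq_mul] at h1
  have hxy : ‖x - y‖ = ‖y - x‖ := norm_sub_rev x y
  rw [hxy] at h1
  have haK : a * K = (C + K) / 2 := by
    rw [ha]; field_simp
  have hb : (0:ℝ) < 1 - a := by linarith
  rw [← hK] at h1
  have h3 : a * (1 - a) * K ≤ (1 - a) * C := by nlinarith [h1, h2]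
  have h4 : a * (1 - a) * K = (1 - a) * (C + K) / 2 := by linear_combination (1 - a) * haK
  nlinarith [h3, h4, mul_pos hb (sub_pos.2 hcon)]

/-- Drift bound between consecutive prefix minimizers. -/
theorem stmt0 {d n : ℕ} (μ G : ℝ) (hμ : 0 < μ) (hG : 0 < G)
    (D : Set (EuclideanSpace ℝ (Fin d))) (hDconv : Convex ℝ D) (hDcomp : IsCompact D)
    (f : ℕ → EuclideanSpace ℝ (Fin d) → ℝ)
    (hsc : ∀ k ∈ Finset.Icc 1 n, StrongConvexOn D μ (f k))
    (hdiff : ∀ k ∈ Finset.Icc 1 n, ∀ x ∈ D, DifferentiableAt ℝ (f k) x)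
    (hlip : ∀ k ∈ Finset.Icc 1 n, ∀ x ∈ D, ∀ y ∈ D, |f k x - f k y| ≤ G * ‖x - y‖)
    (g : ℕ → EuclideanSpace ℝ (Fin d) → ℝ)
    (hg : ∀ i x, g i x = (∑ k ∈ Finset.Icc 1 i, f k x) / i)
    (xstar : ℕ → EuclideanSpace ℝ (Fin d))
    (hxstarD : ∀ i ∈ Finset.Icc 1 n, xstar i ∈ D)
    (hxstarmin : ∀ i ∈ Finset.Icc 1 n, IsMinOn (g i) D (xstar i)) :
    ∀ i ∈ Finset.Icc 1 (n - 1), ∀ j ∈ Finset.Icc 1 (n - i),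
      ‖xstar (i + j) - xstar i‖ ≤ 2 * j * G / (μ * (2 * i + j)) := by
  -- g i is μ-strongly convex for 1 ≤ i ≤ n
  have hgsc : ∀ i, 1 ≤ i → i ≤ n → StrongConvexOn D μ (g i) := by
    intro i hi1 hin
    refine ⟨hDconv, ?_⟩
    intro x hx y hy a b ha hb hab
    have hipos : (0:ℝ) < (i:ℝ) := by exact_mod_cast hi1
    simp only [hg, smul_eq_mul]
    have hsum : (∑ k ∈ Finset.Icc 1 i, f k (a • x + b • y)) ≤
        ∑ k ∈ Finset.Icc 1 i, (a * f k x + b * f k y - a * b * (μ / 2 * ‖x - y‖ ^ 2)) := by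
      refine Finset.sum_le_sum ?_
      intro k hk
      have hkn : k ∈ Finset.Icc 1 n := by
        rw [Finset.mem_Icc] at hk ⊢; omega
      have := (hsc k hkn).2 hx hy ha hb hab
      simpa using this
    have hcount : ∑ k ∈ Finset.Icc 1 i, (a * f k x + b * f k y - a * b * (μ / 2 * ‖x - y‖ ^ 2))
        = a * (∑ k ∈ Finset.Icc 1 i, f k x) + b * (∑ k ∈ Finset.Icc 1 i, f k y)
          - (i:ℝ) * (a * b * (μ / 2 * ‖x - y‖ ^ 2)) := by
      rw [Finset.sum_sub_distrib, Finset.sum_add_distrib, ← Finset.mul_sum, ← Finset.mul_sum,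
        Finset.sum_const, Nat.card_Icc]
      simp [nsmul_eq_mul]
    have hrhs : a * ((∑ k ∈ Finset.Icc 1 i, f k x) / i) + b * ((∑ k ∈ Finset.Icc 1 i, f k y) / i)
        - a * b * (μ / 2 * ‖x - y‖ ^ 2)
        = (a * (∑ k ∈ Finset.Icc 1 i, f k x) + b * (∑ k ∈ Finset.Icc 1 i, f k y)
          - (i:ℝ) * (a * b * (μ / 2 * ‖x - y‖ ^ 2))) / i := by
      field_simp
    rw [hrhs, ← hcount]
    gcongr
  intro i hi j hj
  rw [Finset.mem_Icc] at hi hj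
  obtain ⟨hi1, hi2⟩ := hi
  obtain ⟨hj1, hj2⟩ := hj
  have hin : i ≤ n := by omega
  have hijn : i + j ≤ n := by omega
  have himem : i ∈ Finset.Icc 1 n := Finset.mem_Icc.2 ⟨hi1, hin⟩
  have hijmem : i + j ∈ Finset.Icc 1 n := Finset.mem_Icc.2 ⟨by omega, hijn⟩
  set A : ℝ := ‖xstar (i + j) - xstar i‖ with hA
  have hA0 : (0:ℝ) ≤ A := norm_nonneg _
  have h1 : μ / 2 * A ^ 2 ≤ g i (xstar (i + j)) - g i (xstar i) :=
    minGap (hgsc i hi1 hin) (hxstarD i himem) (hxstarD _ hijmem) (hxstarmin i himem)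
  have h2 : μ / 2 * A ^ 2 ≤ g (i + j) (xstar i) - g (i + j) (xstar (i + j)) := by
    have := minGap (hgsc (i + j) (by omega) hijn) (hxstarD _ hijmem) (hxstarD i himem)
      (hxstarmin _ hijmem)
    rwa [norm_sub_rev, ← hA] at this
  -- sum splitting
  have hsplit : ∀ z, (∑ k ∈ Finset.Icc 1 (i + j), f k z)
      = (∑ k ∈ Finset.Icc 1 i, f k z) + ∑ k ∈ Finset.Ioc i (i + j), f k z := by
    intro z
    have e1 : Finset.Icc 1 (i + j) = Finset.Ioc 0 (i + j) := by
      ext k; simp [Finset.mem_Icc, Finset.mem_Ioc]; omega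
    have e2 : Finset.Icc 1 i = Finset.Ioc 0 i := by
      ext k; simp [Finset.mem_Icc, Finset.mem_Ioc]; omega
    rw [e1, e2, Finset.sum_Ioc_consecutive _ (Nat.zero_le i) (Nat.le_add_right i j)]
  have hgi : ∀ z, (i:ℝ) * g i z = ∑ k ∈ Finset.Icc 1 i, f k z := by
    intro z
    have hipos : (0:ℝ) < (i:ℝ) := by exact_mod_cast hi1
    rw [hg]; field_simp
  have hgij : ∀ z, ((i:ℝ) + (j:ℝ)) * g (i + j) z = ∑ k ∈ Finset.Icc 1 (i + j), f k z := by
    intro z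
    have hpos : (0:ℝ) < (i:ℝ) + (j:ℝ) := by
      have : (0:ℝ) < (i:ℝ) := by exact_mod_cast hi1
      have : (0:ℝ) ≤ (j:ℝ) := by positivity
      linarith
    rw [hg]
    push_cast
    field_simp
  -- Lipschitz sum bound
  have hlipsum : ∑ k ∈ Finset.Ioc i (i + j), (f k (xstar i) - f k (xstar (i + j)))
      ≤ (j:ℝ) * (G * A) := by
    have hb : ∀ k ∈ Finset.Ioc i (i + j), f k (xstar i) - f k (xstar (i + j)) ≤ G * A := by
      intro k hk
      rw [Finset.mem_Ioc] at hk
      have hkn : k ∈ Finset.Icc 1 n := Finset.mem_Icc.2 ⟨by omega, by omega⟩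
      have := hlip k hkn (xstar i) (hxstarD i himem) (xstar (i + j)) (hxstarD _ hijmem)
      calc f k (xstar i) - f k (xstar (i + j)) ≤ |f k (xstar i) - f k (xstar (i + j))| :=
            le_abs_self _
        _ ≤ G * ‖xstar i - xstar (i + j)‖ := this
        _ = G * A := by rw [hA, norm_sub_rev]
    calc ∑ k ∈ Finset.Ioc i (i + j), (f k (xstar i) - f k (xstar (i + j)))
        ≤ (Finset.Ioc i (i + j)).card • (G * A) := Finset.sum_le_card_nsmul _ _ _ hb
      _ = (j:ℝ) * (G * A) := by
          rw [Nat.card_Ioc, Nat.add_sub_cancel_left, nsmul_eq_mul]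
  -- key identity
  have hkey : ((i:ℝ) + (j:ℝ)) * (g (i + j) (xstar i) - g (i + j) (xstar (i + j)))
      = (i:ℝ) * (g i (xstar i) - g i (xstar (i + j)))
        + ∑ k ∈ Finset.Ioc i (i + j), (f k (xstar i) - f k (xstar (i + j))) := by
    rw [Finset.sum_sub_distrib]
    linear_combination hgij (xstar i) - hgij (xstar (i + j)) - hgi (xstar i) + hgi (xstar (i + j))
      + hsplit (xstar i) - hsplit (xstar (i + j))
  have hipos : (0:ℝ) < (i:ℝ) := by exact_mod_cast hi1
  have hjpos : (0:ℝ) < (j:ℝ) := by exact_mod_cast hj1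
  -- combine: (2i+j) * μ/2 * A^2 ≤ j * G * A
  have hmain : (2 * (i:ℝ) + (j:ℝ)) * (μ / 2 * A ^ 2) ≤ (j:ℝ) * G * A := by
    nlinarith [mul_le_mul_of_nonneg_left h1 hipos.le,
      mul_le_mul_of_nonneg_left h2 (by linarith : (0:ℝ) ≤ (i:ℝ) + (j:ℝ))]
  rcases eq_or_lt_of_le hA0 with h0 | h0
  · rw [← h0]
    positivity
  · rw [le_div_iff₀ (by positivity)]
    nlinarith
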